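/- arXiv:1012.5055 — 2 statements merged into one kernel-verified Lean document; each statement's English description precedes it below -/
import Mathlib

section
/- Let F ∈ M_{2d}(ℝ) be a symplectic matrix (Fᵀ J F = J with J = [[0, Id_d], [−Id_d, 0]]), and define the complex d × d matrix Z = (i Id_d Id_d) Fᵀ (−i Id_d ; Id_d) (row-block times Fᵀ times column-block). Then Z Z* = W + 2 Id_d where W = (i Id_d Id_d)(Fᵀ F)(−i Id_d ; Id_d) is Hermitian positive semidefinite; in particular Z Z* − 2 Id_d is positive semidefinite, Z is invertible, and the operator norm of Z^{−1} is at most 2^{−1/2}. -/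
open Matrix
open scoped ComplexOrder

namespace SymplecticZAux

noncomputable def Cols (d : ℕ) : Matrix (Fin d) (Fin d ⊕ Fin d) ℂ :=
  Matrix.fromCols (Complex.I • (1 : Matrix (Fin d) (Fin d) ℂ)) 1

noncomputable def Rows (d : ℕ) : Matrix (Fin d ⊕ Fin d) (Fin d) ℂ :=
  Matrix.fromRows ((-Complex.I) • (1 : Matrix (Fin d) (Fin d) ℂ)) 1

noncomputable def Jc (d : ℕ) : Matrix (Fin d ⊕ Fin d) (Fin d ⊕ Fin d) ℂ :=
  Matrix.fromBlocks 0 1 (-1) 0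

lemma mapC_mul {m n p : Type*} [Fintype n] (M : Matrix m n ℝ) (N : Matrix n p ℝ) :
    (M * N).map Complex.ofReal = M.map Complex.ofReal * N.map Complex.ofReal := by
  ext i j
  simp [Matrix.mul_apply, Matrix.map_apply]

lemma mapC_conjTranspose {m n : Type*} (M : Matrix m n ℝ) :
    (M.map Complex.ofReal)ᴴ = Mᵀ.map Complex.ofReal := by
  ext i j
  simp [Matrix.conjTranspose_apply, Matrix.map_apply, Complex.conj_ofReal]

lemma rowsH (d : ℕ) : (Rows d)ᴴ = Cols d := by
  rw [Rows, Cols, conjTranspose_fromRows_eq_fromCols_conjTranspose]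
  congr 1 <;> simp

lemma colsH (d : ℕ) : (Cols d)ᴴ = Rows d := by
  rw [← rowsH, conjTranspose_conjTranspose]

lemma rows_mul_cols (d : ℕ) : Rows d * Cols d = 1 + (-Complex.I) • Jc d := by
  rw [Rows, Cols, fromRows_mul_fromCols, Jc, ← fromBlocks_one, fromBlocks_smul,
    fromBlocks_add]
  congr 1 <;> simp [Matrix.smul_mul, Matrix.mul_smul, smul_smul, Complex.I_mul_I]

lemma cols_mul_Jc_mul_rows (d : ℕ) :
    Cols d * Jc d * Rows d = (2 * Complex.I) • 1 := by
  rw [Cols, Jc, fromCols_mul_fromBlocks, Rows, fromCols_mul_fromRows]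
  simp [Matrix.smul_mul, Matrix.mul_smul, smul_smul, Complex.I_mul_I, two_mul, add_smul]

lemma Jmap (d : ℕ) :
    (Matrix.fromBlocks (0 : Matrix (Fin d) (Fin d) ℝ) 1 (-1) 0).map Complex.ofReal = Jc d := by
  ext i j
  cases i <;> cases j <;>
    simp [Jc, fromBlocks, Matrix.map_apply, Matrix.one_apply, apply_ite]

lemma keyCalc {d : ℕ} (M N : Matrix (Fin d ⊕ Fin d) (Fin d ⊕ Fin d) ℝ)
    (h : M * Matrix.fromBlocks 0 1 (-1) 0 * N = Matrix.fromBlocks 0 1 (-1) 0) :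
    (Cols d * M.map Complex.ofReal * Rows d) * (Cols d * N.map Complex.ofReal * Rows d)
      = Cols d * ((M * N).map Complex.ofReal) * Rows d + (2:ℂ) • 1 := by
  have hmid : M.map Complex.ofReal * Jc d * N.map Complex.ofReal = Jc d := by
    rw [← Jmap d, ← mapC_mul, ← mapC_mul, h]
  have expand : (Cols d * M.map Complex.ofReal * Rows d) *
        (Cols d * N.map Complex.ofReal * Rows d)
      = Cols d * (M.map Complex.ofReal *
          ((1 + (-Complex.I) • Jc d) * (N.map Complex.ofReal * Rows d))) := by
    rw [← rows_mul_cols]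
    simp only [Matrix.mul_assoc]
  rw [expand, Matrix.add_mul, Matrix.one_mul, Matrix.smul_mul, Matrix.mul_add, Matrix.mul_add,
    Matrix.mul_smul, Matrix.mul_smul]
  congr 1
  · rw [mapC_mul]
    simp only [Matrix.mul_assoc]
  · have hre : Cols d * (M.map Complex.ofReal * (Jc d * (N.map Complex.ofReal * Rows d)))
        = Cols d * Jc d * Rows d := by
      conv_rhs => rw [← hmid]
      simp only [Matrix.mul_assoc]
    rw [hre, cols_mul_Jc_mul_rows, smul_smul]
    congr 1
    ring_nf
    rw [Complex.I_sq]
    ring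

lemma factor_posSemidef {d : ℕ} (G : Matrix (Fin d ⊕ Fin d) (Fin d ⊕ Fin d) ℝ) :
    (Cols d * ((G * Gᵀ).map Complex.ofReal) * Rows d).PosSemidef := by
  have hfact : Cols d * ((G * Gᵀ).map Complex.ofReal) * Rows d
      = (Cols d * G.map Complex.ofReal) * (Cols d * G.map Complex.ofReal)ᴴ := by
    rw [conjTranspose_mul, mapC_conjTranspose, colsH, mapC_mul]
    simp only [Matrix.mul_assoc]
  rw [hfact]
  exact posSemidef_self_mul_conjTranspose _

end SymplecticZAux

open SymplecticZAux in
/-- For a symplectic matrix `F`, the matrix `Z = (i Id  Id) Fᵀ (−i Id ; Id)` satisfies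
`Z Z* = W + 2 Id` with `W = (i Id  Id)(FᵀF)(−i Id ; Id)` Hermitian positive semidefinite;
hence `Z Z* − 2 Id` is positive semidefinite, `Z` is invertible, and `‖Z⁻¹‖ ≤ 2^{−1/2}`
in operator norm. -/
theorem symplectic_Z_invertible (d : ℕ) (hd : 1 ≤ d)
    (F : Matrix (Fin d ⊕ Fin d) (Fin d ⊕ Fin d) ℝ)
    (J : Matrix (Fin d ⊕ Fin d) (Fin d ⊕ Fin d) ℝ)
    (hJ : J = Matrix.fromBlocks (0 : Matrix (Fin d) (Fin d) ℝ) 1 (-1) 0)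
    (hF : Fᵀ * J * F = J)
    (Z W : Matrix (Fin d) (Fin d) ℂ)
    (hZ : Z = Matrix.fromCols (Complex.I • (1 : Matrix (Fin d) (Fin d) ℂ)) (1 : Matrix (Fin d) (Fin d) ℂ) *
      (Fᵀ.map (Complex.ofReal)) *
      Matrix.fromRows ((-Complex.I) • (1 : Matrix (Fin d) (Fin d) ℂ)) (1 : Matrix (Fin d) (Fin d) ℂ))
    (hW : W = Matrix.fromCols (Complex.I • (1 : Matrix (Fin d) (Fin d) ℂ)) (1 : Matrix (Fin d) (Fin d) ℂ) *
      ((Fᵀ * F).map (Complex.ofReal)) *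
      Matrix.fromRows ((-Complex.I) • (1 : Matrix (Fin d) (Fin d) ℂ)) (1 : Matrix (Fin d) (Fin d) ℂ)) :
    Z * Zᴴ = W + (2:ℂ) • (1 : Matrix (Fin d) (Fin d) ℂ) ∧
    W.IsHermitian ∧ W.PosSemidef ∧
    (Z * Zᴴ - (2:ℂ) • (1 : Matrix (Fin d) (Fin d) ℂ)).PosSemidef ∧
    IsUnit Z ∧
    ∀ v : EuclideanSpace ℂ (Fin d),
      ‖Matrix.toEuclideanLin (Z⁻¹) v‖ ≤ (2:ℝ) ^ (-(1:ℝ)/2) * ‖v‖ := by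
  -- rephrase hZ, hW via the auxiliary definitions
  have hZ' : Z = Cols d * (Fᵀ.map Complex.ofReal) * Rows d := hZ
  have hW' : W = Cols d * ((Fᵀ * F).map Complex.ofReal) * Rows d := hW
  -- symplectic consequences
  have hsym1 : Fᵀ * Matrix.fromBlocks 0 1 (-1) 0 * F = Matrix.fromBlocks 0 1 (-1) 0 := by
    rw [← hJ]; exact hF
  have hJml : Matrix.J (Fin d) ℝ = -J := by
    rw [hJ, Matrix.J]
    ext i j
    cases i <;> cases j <;> simp [fromBlocks]
  have hFmem : F ∈ Matrix.symplecticGroup (Fin d) ℝ := by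
    rw [SymplecticGroup.mem_iff', hJml]
    simp only [Matrix.mul_neg, Matrix.neg_mul]
    rw [hF]
  have hFJFT : F * J * Fᵀ = J := by
    have := SymplecticGroup.mem_iff.mp hFmem
    rw [hJml] at this
    simpa only [Matrix.mul_neg, Matrix.neg_mul, neg_inj] using this
  have hsym2 : F * Matrix.fromBlocks 0 1 (-1) 0 * Fᵀ = Matrix.fromBlocks 0 1 (-1) 0 := by
    rw [← hJ]; exact hFJFT
  -- conjugate transpose of Z
  have hZH : Zᴴ = Cols d * (F.map Complex.ofReal) * Rows d := by
    rw [hZ', conjTranspose_mul, conjTranspose_mul, mapC_conjTranspose, transpose_transpose,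
      rowsH, colsH]
    simp only [Matrix.mul_assoc]
  -- main identities
  have h1 : Z * Zᴴ = W + (2:ℂ) • 1 := by
    rw [hZH, hZ', keyCalc Fᵀ F hsym1, ← hW']
  have hWps : W.PosSemidef := by
    have : W = Cols d * ((Fᵀ * Fᵀᵀ).map Complex.ofReal) * Rows d := by
      rw [hW', transpose_transpose]
    rw [this]
    exact factor_posSemidef Fᵀ
  have hsub : (Z * Zᴴ - (2:ℂ) • (1 : Matrix (Fin d) (Fin d) ℂ)).PosSemidef := by
    rw [h1, add_sub_cancel_right]
    exact hWps
  -- Zᴴ * Z identity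
  have h2 : Zᴴ * Z = Cols d * ((F * Fᵀ).map Complex.ofReal) * Rows d + (2:ℂ) • 1 := by
    rw [hZH, hZ', keyCalc F Fᵀ hsym2]
  have hW2ps : (Cols d * ((F * Fᵀ).map Complex.ofReal) * Rows d).PosSemidef :=
    factor_posSemidef F
  -- invertibility
  have h2eq : (2:ℂ) • (1 : Matrix (Fin d) (Fin d) ℂ) = (2 : Matrix (Fin d) (Fin d) ℂ) := by
    rw [two_smul]; exact one_add_one_eq_two
  have hpd : (Z * Zᴴ).PosDef := by
    rw [h1, h2eq]
    exact Matrix.PosDef.posSemidef_add hWps (Matrix.PosDef.ofNat 2)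
  have hu : IsUnit Z := by
    have := hpd.isUnit
    rw [Matrix.isUnit_iff_isUnit_det, Matrix.det_mul] at this
    exact (Matrix.isUnit_iff_isUnit_det Z).mpr (isUnit_of_mul_isUnit_left this)
  refine ⟨h1, hWps.isHermitian, hWps, hsub, hu, ?_⟩
  -- the norm bound
  intro v
  set v' : Fin d → ℂ := (WithLp.equiv 2 (Fin d → ℂ)) v with hv'
  set w : Fin d → ℂ := Z⁻¹ *ᵥ v' with hw
  have hZw : Z *ᵥ w = v' := by
    rw [hw, Matrix.mulVec_mulVec, Matrix.mul_nonsing_inv _ ((Matrix.isUnit_iff_isUnit_det Z).mp hu),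
      Matrix.one_mulVec]
  -- positivity of Zᴴ Z - 2
  have hposeq : Zᴴ * Z - (2:ℂ) • 1 = Cols d * ((F * Fᵀ).map Complex.ofReal) * Rows d := by
    rw [h2, add_sub_cancel_right]
  have hkey : 0 ≤ RCLike.re (dotProduct (star w) ((Zᴴ * Z - (2:ℂ) • 1) *ᵥ w)) := by
    rw [hposeq]
    exact hW2ps.re_dotProduct_nonneg w
  have hexpand : dotProduct (star w) ((Zᴴ * Z - (2:ℂ) • 1) *ᵥ w)
      = dotProduct (star v') v' - 2 * dotProduct (star w) w := by
    rw [Matrix.sub_mulVec, dotProduct_sub, Matrix.smul_mulVec, Matrix.one_mulVec,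
      dotProduct_smul, ← Matrix.mulVec_mulVec, Matrix.dotProduct_mulVec, ← Matrix.star_mulVec,
      hZw, smul_eq_mul]
  rw [hexpand, map_sub] at hkey
  have hkey2 : 2 * RCLike.re (dotProduct (star w) w) ≤ RCLike.re (dotProduct (star v') v') := by
    have : RCLike.re ((2:ℂ) * dotProduct (star w) w) = 2 * RCLike.re (dotProduct (star w) w) := by
      simp [Complex.ofReal_re]
    linarith [hkey, this.symm.le]
  -- translate to norms
  have hnormw : ‖Matrix.toEuclideanLin Z⁻¹ v‖ ^ 2 = RCLike.re (dotProduct (star w) w) := by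
    have hwe : (WithLp.equiv 2 (Fin d → ℂ)) (Matrix.toEuclideanLin Z⁻¹ v) = w := rfl
    rw [← inner_self_eq_norm_sq (𝕜 := ℂ), EuclideanSpace.inner_eq_star_dotProduct, dotProduct_comm]; rfl
  have hnormv : ‖v‖ ^ 2 = RCLike.re (dotProduct (star v') v') := by
    rw [← inner_self_eq_norm_sq (𝕜 := ℂ), EuclideanSpace.inner_eq_star_dotProduct, dotProduct_comm]; rfl
  -- finish with rpow arithmetic
  have hc : ((2:ℝ) ^ (-(1:ℝ)/2)) ^ 2 = 1 / 2 := by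
    rw [← Real.rpow_natCast ((2:ℝ) ^ (-(1:ℝ)/2)) 2, ← Real.rpow_mul (by norm_num)]
    norm_num
  have hcpos : (0:ℝ) < (2:ℝ) ^ (-(1:ℝ)/2) := Real.rpow_pos_of_pos (by norm_num) _
  have hsq : ‖Matrix.toEuclideanLin Z⁻¹ v‖ ^ 2 ≤ ((2:ℝ) ^ (-(1:ℝ)/2) * ‖v‖) ^ 2 := by
    rw [mul_pow, hc, hnormw, hnormv]
    linarith
  calc ‖Matrix.toEuclideanLin Z⁻¹ v‖
      = Real.sqrt (‖Matrix.toEuclideanLin Z⁻¹ v‖ ^ 2) := by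
        rw [Real.sqrt_sq (norm_nonneg _)]
    _ ≤ Real.sqrt (((2:ℝ) ^ (-(1:ℝ)/2) * ‖v‖) ^ 2) := Real.sqrt_le_sqrt hsq
    _ = (2:ℝ) ^ (-(1:ℝ)/2) * ‖v‖ := Real.sqrt_sq (by positivity)
end

section
/- Under the setup of a Hamiltonian flow (Q(t,q,p), P(t,q,p)) with action S(t,q,p) = ∫₀ᵗ (P·∂_τ Q − H(Q,P)) dτ (flow C¹ in (q,p), staying in |P| > 0 on [0,T]), define the phase Φ(t,x,y,q,p) = S(t,q,p) + (i/2)|x − Q(t,q,p)|² + P(t,q,p)·(x − Q(t,q,p)) + (i/2)|y − q|² − p·(y − q), and set ∂_z = ∂_q − i∂_p and Z(t,q,p) = ∂_z(Q + iP)(t,q,p) (the d × d matrix with entries Z_{jk} = ∂_{z_j}(Q_k + iP_k)). Then for every t ∈ [0,T], x, y ∈ ℝ^d and j = 1,…,d: i ∂_{z_j} Φ(t,x,y,q,p) = Σ_k Z_{jk}(t,q,p) (x − Q(t,q,p))_k. -/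
open MeasureTheory Set intervalIntegral ContinuousLinearMap
set_option synthInstance.maxHeartbeats 1000000
set_option maxHeartbeats 4000000

section
variable (d : ℕ)

/-- The FGA phase
`Φ = S + (i/2)|x − Q|² + P·(x − Q) + (i/2)|y − q|² − p·(y − q)`. -/
noncomputable def fgaPhase
    (Q P : ℝ → EuclideanSpace ℝ (Fin d) → EuclideanSpace ℝ (Fin d) → EuclideanSpace ℝ (Fin d))
    (S : ℝ → EuclideanSpace ℝ (Fin d) → EuclideanSpace ℝ (Fin d) → ℝ)
    (t : ℝ) (x y q p : EuclideanSpace ℝ (Fin d)) : ℂ :=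
  ((S t q p : ℝ) : ℂ) + Complex.I/2 * (‖x - Q t q p‖ : ℂ)^2
    + ((inner ℝ (P t q p) (x - Q t q p) : ℝ) : ℂ)
    + Complex.I/2 * (‖y - q‖ : ℂ)^2 - ((inner ℝ p (y - q) : ℝ) : ℂ)

end

abbrev ES (d : ℕ) : Type := EuclideanSpace ℝ (Fin d)

/-- Differentiation under the interval integral for parameters in an open set,
with jointly continuous integrand and derivative. -/
theorem param_hasFDerivAt
    {F V : Type*} [NormedAddCommGroup F] [NormedSpace ℝ F] [ProperSpace F]
    [NormedAddCommGroup V] [NormedSpace ℝ V] [CompleteSpace V]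
    {Ω : Set F} (hΩ : IsOpen Ω) {u₀ : F} (hu₀ : u₀ ∈ Ω)
    {T t : ℝ} (ht : t ∈ Icc (0:ℝ) T)
    (φ : ℝ → F → V) (Dφ : ℝ → F → (F →L[ℝ] V))
    (hφ : ContinuousOn (fun z : ℝ × F => φ z.1 z.2) (Icc 0 T ×ˢ Ω))
    (hDφc : ContinuousOn (fun z : ℝ × F => Dφ z.1 z.2) (Icc 0 T ×ˢ Ω))
    (hD : ∀ τ ∈ Icc (0:ℝ) T, ∀ u ∈ Ω, HasFDerivAt (fun u' => φ τ u') (Dφ τ u) u) :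
    HasFDerivAt (fun u => ∫ τ in (0:ℝ)..t, φ τ u) (∫ τ in (0:ℝ)..t, Dφ τ u₀) u₀ := by
  obtain ⟨ε, hε, hball⟩ := Metric.isOpen_iff.1 hΩ u₀ hu₀
  have hcb : Metric.closedBall u₀ (ε/2) ⊆ Ω :=
    (Metric.closedBall_subset_ball (by linarith)).trans hball
  have hK : IsCompact (Icc (0:ℝ) T ×ˢ Metric.closedBall u₀ (ε/2)) :=
    isCompact_Icc.prod (isCompact_closedBall _ _)
  obtain ⟨C, hC⟩ := hK.exists_bound_of_continuousOn
    (hDφc.mono (Set.prod_mono_right hcb))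
  have hIsub : Set.uIoc (0:ℝ) t ⊆ Icc 0 T := by
    rw [Set.uIoc_of_le ht.1]
    exact (Set.Ioc_subset_Icc_self).trans (Set.Icc_subset_Icc le_rfl ht.2)
  have hIccsub : Set.uIcc (0:ℝ) t ⊆ Icc 0 T := by
    rw [Set.uIcc_of_le ht.1]
    exact Set.Icc_subset_Icc le_rfl ht.2
  have hcont_u : ∀ u ∈ Ω, ContinuousOn (fun τ => φ τ u) (Icc 0 T) := by
    intro u hu
    have : ContinuousOn (fun τ : ℝ => ((τ, u) : ℝ × F)) (Icc 0 T) :=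
      (continuous_id.prodMk continuous_const).continuousOn
    exact hφ.comp this (fun τ hτ => ⟨hτ, hu⟩)
  have hcont_D : ContinuousOn (fun τ => Dφ τ u₀) (Icc 0 T) := by
    have : ContinuousOn (fun τ : ℝ => ((τ, u₀) : ℝ × F)) (Icc 0 T) :=
      (continuous_id.prodMk continuous_const).continuousOn
    exact hDφc.comp this (fun τ hτ => ⟨hτ, hu₀⟩)
  have h1 : ∀ᶠ u in nhds u₀, AEStronglyMeasurable (fun τ => φ τ u)
      (volume.restrict (Set.uIoc (0:ℝ) t)) := by
    filter_upwards [hΩ.mem_nhds hu₀] with u hu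
    exact ((hcont_u u hu).mono hIsub).aestronglyMeasurable measurableSet_uIoc
  have h2 : IntervalIntegrable (fun τ => φ τ u₀) volume 0 t :=
    ((hcont_u u₀ hu₀).mono hIccsub).intervalIntegrable
  have h3 : AEStronglyMeasurable (fun τ => Dφ τ u₀)
      (volume.restrict (Set.uIoc (0:ℝ) t)) :=
    (hcont_D.mono hIsub).aestronglyMeasurable measurableSet_uIoc
  have h4 : ∀ᵐ τ ∂volume, τ ∈ Set.uIoc (0:ℝ) t →
      ∀ u ∈ Metric.ball u₀ (ε/2), ‖Dφ τ u‖ ≤ C := by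
    refine Filter.Eventually.of_forall (fun τ hτ u hu => ?_)
    exact hC (τ, u) ⟨hIsub hτ, Metric.ball_subset_closedBall hu⟩
  have h6 : ∀ᵐ τ ∂volume, τ ∈ Set.uIoc (0:ℝ) t →
      ∀ u ∈ Metric.ball u₀ (ε/2), HasFDerivAt (fun u' => φ τ u') (Dφ τ u) u := by
    refine Filter.Eventually.of_forall (fun τ hτ u hu => ?_)
    exact hD τ (hIsub hτ) u (hcb (Metric.ball_subset_closedBall hu))
  exact intervalIntegral.hasFDerivAt_integral_of_dominated_of_fderiv_le
    (F := fun u τ => φ τ u) (F' := fun u τ => Dφ τ u) (Metric.ball_mem_nhds u₀ (half_pos hε)) h1 h2 h3 h4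
    intervalIntegrable_const h6


section defs
variable (d : ℕ)

def Om : Set (ES d × ES d) := {u | u.2 ≠ 0}

lemma isOpen_Om : IsOpen (Om d) :=
  isOpen_compl_singleton.preimage continuous_snd

def flowF (Q P : ℝ → ES d → ES d → ES d) : ℝ × (ES d × ES d) → ES d × ES d :=
  fun w => (Q w.1 w.2.1 w.2.2, P w.1 w.2.1 w.2.2)

def dom (T : ℝ) : Set (ℝ × (ES d × ES d)) := Set.Icc 0 T ×ˢ Om d

noncomputable def Mder (T : ℝ) (Q P : ℝ → ES d → ES d → ES d) :
    ℝ → ES d × ES d → ((ES d × ES d) →L[ℝ] (ES d × ES d)) :=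
  fun s u => (fderivWithin ℝ (flowF d Q P) (dom d T) (s, u)).comp (inr ℝ ℝ (ES d × ES d))

noncomputable def gbf (H : ES d → ES d → ℝ) : ES d × ES d → ES d :=
  fun u => (InnerProductSpace.toDual ℝ (ES d)).symm
    ((fderiv ℝ (fun v : ES d × ES d => H v.1 v.2) u).comp (inr ℝ (ES d) (ES d)))

noncomputable def gaf (H : ES d → ES d → ℝ) : ES d × ES d → ES d :=
  fun u => (InnerProductSpace.toDual ℝ (ES d)).symm
    ((fderiv ℝ (fun v : ES d × ES d => H v.1 v.2) u).comp (inl ℝ (ES d) (ES d)))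

noncomputable def RHSf (H : ES d → ES d → ℝ) : ES d × ES d → ES d × ES d :=
  fun u => (gbf d H u, -gaf d H u)

noncomputable def Gf (H : ES d → ES d → ℝ) : ES d × ES d → ℝ :=
  fun u => (inner ℝ u.2 (gbf d H u) : ℝ) - H u.1 u.2

end defs

section grad
variable {d : ℕ} {H : ES d → ES d → ℝ}

noncomputable def dualIso (d : ℕ) : ((ES d) →L[ℝ] ℝ) ≃ₗᵢ[ℝ] ES d :=
  (InnerProductSpace.toDual ℝ (ES d)).symm

variable (hH : ContDiffOn ℝ 2 (fun qp : ES d × ES d => H qp.1 qp.2) (Om d))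
include hH

lemma h2diff : ∀ u ∈ Om d, HasFDerivAt (fun v : ES d × ES d => H v.1 v.2)
    (fderiv ℝ (fun v : ES d × ES d => H v.1 v.2) u) u := fun u hu =>
  (((hH.differentiableOn (by norm_num)).differentiableAt
    ((isOpen_Om d).mem_nhds hu))).hasFDerivAt

lemma contDiffOn_gbf : ContDiffOn ℝ 1 (gbf d H) (Om d) := by
  have h1 : ContDiffOn ℝ 1 (fderiv ℝ (fun v : ES d × ES d => H v.1 v.2)) (Om d) :=
    hH.fderiv_of_isOpen (isOpen_Om d) (by norm_num)
  have h2 : gbf d H = fun u =>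
      ((dualIso d).toContinuousLinearEquiv.toContinuousLinearMap.comp
        ((ContinuousLinearMap.compL ℝ (ES d) (ES d × ES d) ℝ).flip (inr ℝ (ES d) (ES d))))
      (fderiv ℝ (fun v : ES d × ES d => H v.1 v.2) u) := rfl
  rw [h2]
  exact (ContinuousLinearMap.contDiff _).comp_contDiffOn h1

lemma contDiffOn_gaf : ContDiffOn ℝ 1 (gaf d H) (Om d) := by
  have h1 : ContDiffOn ℝ 1 (fderiv ℝ (fun v : ES d × ES d => H v.1 v.2)) (Om d) :=
    hH.fderiv_of_isOpen (isOpen_Om d) (by norm_num)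
  have h2 : gaf d H = fun u =>
      ((dualIso d).toContinuousLinearEquiv.toContinuousLinearMap.comp
        ((ContinuousLinearMap.compL ℝ (ES d) (ES d × ES d) ℝ).flip (inl ℝ (ES d) (ES d))))
      (fderiv ℝ (fun v : ES d × ES d => H v.1 v.2) u) := rfl
  rw [h2]
  exact (ContinuousLinearMap.contDiff _).comp_contDiffOn h1

lemma hasFDerivAt_partial_b : ∀ u ∈ Om d, HasFDerivAt (fun b => H u.1 b)
    ((fderiv ℝ (fun v : ES d × ES d => H v.1 v.2) u).comp (inr ℝ (ES d) (ES d))) u.2 :=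
  fun u hu => (h2diff hH u hu).comp u.2 (g := fun v : ES d × ES d => H v.1 v.2)
    (f := fun b : ES d => (u.1, b)) (hasFDerivAt_prodMk_right u.1 u.2)

lemma hasFDerivAt_partial_a : ∀ u ∈ Om d, HasFDerivAt (fun a => H a u.2)
    ((fderiv ℝ (fun v : ES d × ES d => H v.1 v.2) u).comp (inl ℝ (ES d) (ES d))) u.1 :=
  fun u hu => (h2diff hH u hu).comp u.1 (g := fun v : ES d × ES d => H v.1 v.2)
    (f := fun a : ES d => (a, u.2)) (hasFDerivAt_prodMk_left u.1 u.2)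

lemma gradb_eq : ∀ u ∈ Om d, gradient (H u.1) u.2 = gbf d H u := fun u hu =>
  ((hasFDerivAt_partial_b hH u hu).hasGradientAt).gradient

lemma grada_eq : ∀ u ∈ Om d, gradient (fun a => H a u.2) u.1 = gaf d H u := fun u hu =>
  ((hasFDerivAt_partial_a hH u hu).hasGradientAt).gradient

lemma inner_gbf (u : ES d × ES d) (v : ES d) :
    (inner ℝ (gbf d H u) v : ℝ) = fderiv ℝ (fun w : ES d × ES d => H w.1 w.2) u (0, v) := by
  rw [gbf, InnerProductSpace.toDual_symm_apply]
  rfl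

lemma inner_gaf (u : ES d × ES d) (v : ES d) :
    (inner ℝ (gaf d H u) v : ℝ) = fderiv ℝ (fun w : ES d × ES d => H w.1 w.2) u (v, 0) := by
  rw [gaf, InnerProductSpace.toDual_symm_apply]
  rfl

lemma DH_decomp (u : ES d × ES d) (η : ES d × ES d) :
    fderiv ℝ (fun v : ES d × ES d => H v.1 v.2) u η
      = (inner ℝ (gaf d H u) η.1 : ℝ) + inner ℝ (gbf d H u) η.2 := by
  rw [inner_gaf hH, inner_gbf hH]
  have : η = (η.1, (0 : ES d)) + ((0 : ES d), η.2) := by simp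
  conv_lhs => rw [this]
  rw [map_add]

end grad

lemma om_eq (d : ℕ) : (Set.univ ×ˢ {p : ES d | p ≠ 0}) = Om d := by
  ext u; simp [Om]

noncomputable def gfl (d : ℕ) (H : ES d → ES d → ℝ) (Q P : ℝ → ES d → ES d → ES d) :
    ℝ → ES d × ES d → ES d × ES d :=
  fun s u => RHSf d H (flowF d Q P (s, u))

noncomputable def Dgfl (d : ℕ) (T : ℝ) (H : ES d → ES d → ℝ) (Q P : ℝ → ES d → ES d → ES d) :
    ℝ → ES d × ES d → ((ES d × ES d) →L[ℝ] (ES d × ES d)) :=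
  fun s u => (fderiv ℝ (RHSf d H) (flowF d Q P (s, u))).comp (Mder d T Q P s u)

noncomputable def DGfl (d : ℕ) (T : ℝ) (H : ES d → ES d → ℝ) (Q P : ℝ → ES d → ES d → ES d) :
    ℝ → ES d × ES d → ((ES d × ES d) →L[ℝ] ℝ) :=
  fun s u => (fderiv ℝ (Gf d H) (flowF d Q P (s, u))).comp (Mder d T Q P s u)

section flow
variable {d : ℕ} {T : ℝ} {Q P : ℝ → ES d → ES d → ES d}

lemma uniqueDiffOn_dom (hT : 0 < T) : UniqueDiffOn ℝ (dom d T) :=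
  (uniqueDiffOn_Icc hT).prod (isOpen_Om d).uniqueDiffOn

variable (hflow : ContDiffOn ℝ 1 (flowF d Q P) (dom d T))
include hflow

lemma hasFDerivAt_Mder : ∀ s ∈ Set.Icc (0:ℝ) T, ∀ u ∈ Om d,
    HasFDerivAt (fun u' => flowF d Q P (s, u')) (Mder d T Q P s u) u := by
  intro s hs u hu
  have h1 := (hflow.differentiableOn one_ne_zero (s,u) ⟨hs,hu⟩).hasFDerivWithinAt
  have h2 : HasFDerivWithinAt (fun u' : ES d × ES d => flowF d Q P (s, u'))
      (Mder d T Q P s u) (Om d) u :=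
    h1.comp u (hasFDerivAt_prodMk_right s u).hasFDerivWithinAt (fun u' hu' => ⟨hs, hu'⟩)
  exact h2.hasFDerivAt ((isOpen_Om d).mem_nhds hu)

lemma continuousOn_Mder (hT : 0 < T) :
    ContinuousOn (fun z : ℝ × (ES d × ES d) => Mder d T Q P z.1 z.2) (dom d T) :=
  (hflow.continuousOn_fderivWithin (uniqueDiffOn_dom hT) le_rfl).clm_comp continuousOn_const

end flow

section main
variable {d : ℕ} {T : ℝ} {H : ES d → ES d → ℝ} {Q P : ℝ → ES d → ES d → ES d}

section withH
variable (hH : ContDiffOn ℝ 2 (fun qp : ES d × ES d => H qp.1 qp.2) (Om d))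
include hH

lemma contDiffOn_RHSf : ContDiffOn ℝ 1 (RHSf d H) (Om d) :=
  (contDiffOn_gbf hH).prodMk (contDiffOn_gaf hH).neg

lemma hasFDerivAt_RHSf : ∀ w ∈ Om d, HasFDerivAt (RHSf d H) (fderiv ℝ (RHSf d H) w) w :=
  fun w hw => (((contDiffOn_RHSf hH).differentiableOn one_ne_zero).differentiableAt
    ((isOpen_Om d).mem_nhds hw)).hasFDerivAt

lemma continuousOn_fderiv_RHSf : ContinuousOn (fderiv ℝ (RHSf d H)) (Om d) := by
  have := (contDiffOn_RHSf hH).fderiv_of_isOpen (m := 0) (isOpen_Om d) (by norm_num)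
  exact this.continuousOn

lemma contDiffOn_Gf : ContDiffOn ℝ 1 (Gf d H) (Om d) :=
  (ContDiffOn.inner ℝ (contDiff_snd.contDiffOn) (contDiffOn_gbf hH)).sub (hH.of_le one_le_two)

lemma hasFDerivAt_Gf : ∀ w ∈ Om d, HasFDerivAt (Gf d H) (fderiv ℝ (Gf d H) w) w :=
  fun w hw => (((contDiffOn_Gf hH).differentiableOn one_ne_zero).differentiableAt
    ((isOpen_Om d).mem_nhds hw)).hasFDerivAt

lemma continuousOn_fderiv_Gf : ContinuousOn (fderiv ℝ (Gf d H)) (Om d) := by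
  have := (contDiffOn_Gf hH).fderiv_of_isOpen (m := 0) (isOpen_Om d) (by norm_num)
  exact this.continuousOn

lemma hasFDerivAt_gbf : ∀ w ∈ Om d, HasFDerivAt (gbf d H) (fderiv ℝ (gbf d H) w) w :=
  fun w hw => (((contDiffOn_gbf hH).differentiableOn one_ne_zero).differentiableAt
    ((isOpen_Om d).mem_nhds hw)).hasFDerivAt

lemma hasFDerivAt_gaf : ∀ w ∈ Om d, HasFDerivAt (gaf d H) (fderiv ℝ (gaf d H) w) w :=
  fun w hw => (((contDiffOn_gaf hH).differentiableOn one_ne_zero).differentiableAt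
    ((isOpen_Om d).mem_nhds hw)).hasFDerivAt

lemma fderiv_RHSf_eq : ∀ w ∈ Om d, fderiv ℝ (RHSf d H) w
    = ((fderiv ℝ (gbf d H) w).prod (-(fderiv ℝ (gaf d H) w))) := by
  intro w hw
  have h1 : HasFDerivAt (RHSf d H) ((fderiv ℝ (gbf d H) w).prod (-(fderiv ℝ (gaf d H) w))) w :=
    (hasFDerivAt_gbf hH w hw).prodMk (hasFDerivAt_gaf hH w hw).neg
  exact h1.fderiv

lemma fderiv_Gf_apply : ∀ w ∈ Om d, ∀ η : ES d × ES d,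
    fderiv ℝ (Gf d H) w η
      = (inner ℝ w.2 ((fderiv ℝ (RHSf d H) w η).1) : ℝ) - (inner ℝ (gaf d H w) η.1 : ℝ) := by
  intro w hw η
  have hsnd : HasFDerivAt (fun w : ES d × ES d => w.2) (snd ℝ (ES d) (ES d)) w :=
    hasFDerivAt_snd
  have hinner := hsnd.inner ℝ (hasFDerivAt_gbf hH w hw)
  have hG : HasFDerivAt (Gf d H)
      (((fderivInnerCLM ℝ ((w.2 : ES d), gbf d H w)).comp
        ((snd ℝ (ES d) (ES d)).prod (fderiv ℝ (gbf d H) w)))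
        - fderiv ℝ (fun v : ES d × ES d => H v.1 v.2) w) w :=
    hinner.sub (h2diff hH w hw)
  rw [hG.fderiv]
  have hdec := DH_decomp hH w η
  have hsnd2 : (snd ℝ (ES d) (ES d)) η = η.2 := rfl
  simp only [ContinuousLinearMap.sub_apply, ContinuousLinearMap.comp_apply,
    ContinuousLinearMap.prod_apply, fderivInnerCLM_apply, hsnd2, hdec,
    fderiv_RHSf_eq hH w hw, ContinuousLinearMap.neg_apply]
  rw [real_inner_comm (η.2) (gbf d H w)]
  ring

end withH

section withAll
variable (hT : 0 < T)
variable (hH : ContDiffOn ℝ 2 (fun qp : ES d × ES d => H qp.1 qp.2) (Om d))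
variable (hflow : ContDiffOn ℝ 1 (flowF d Q P) (dom d T))
variable (hQode : ∀ (q p : ES d), p ≠ 0 → ∀ t ∈ Set.Icc (0:ℝ) T,
      HasDerivAt (fun s => Q s q p) (gradient (H (Q t q p)) (P t q p)) t)
variable (hPode : ∀ (q p : ES d), p ≠ 0 → ∀ t ∈ Set.Icc (0:ℝ) T,
      HasDerivAt (fun s => P s q p) (-(gradient (fun q' => H q' (P t q p)) (Q t q p))) t)
variable (hQ0 : ∀ q p, Q 0 q p = q) (hP0 : ∀ q p, P 0 q p = p)
variable (hPne : ∀ (q p : ES d), p ≠ 0 → ∀ t ∈ Set.Icc (0:ℝ) T, P t q p ≠ 0)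

set_option linter.unusedSectionVars false

include hT hH hflow hQode hPode hQ0 hP0 hPne

lemma mem_Om :
    ∀ s ∈ Set.Icc (0:ℝ) T, ∀ u ∈ Om d, flowF d Q P (s, u) ∈ Om d :=
  fun s hs u hu => hPne u.1 u.2 hu s hs

lemma gode : ∀ u ∈ Om d, ∀ s ∈ Set.Icc (0:ℝ) T,
    HasDerivAt (fun τ => flowF d Q P (τ, u)) (gfl d H Q P s u) s := by
  intro u hu s hs
  have h1 := hQode u.1 u.2 hu s hs
  have h2 := hPode u.1 u.2 hu s hs
  have e1 : gradient (H (Q s u.1 u.2)) (P s u.1 u.2) = gbf d H (flowF d Q P (s, u)) :=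
    gradb_eq hH _ (mem_Om hT hH hflow hQode hPode hQ0 hP0 hPne s hs u hu)
  have e2 : gradient (fun q' => H q' (P s u.1 u.2)) (Q s u.1 u.2)
      = gaf d H (flowF d Q P (s, u)) :=
    grada_eq hH _ (mem_Om hT hH hflow hQode hPode hQ0 hP0 hPne s hs u hu)
  rw [e1] at h1
  rw [e2] at h2
  exact h1.prodMk h2

lemma continuousOn_gfl : ContinuousOn (fun z : ℝ × (ES d × ES d) => gfl d H Q P z.1 z.2)
    (dom d T) :=
  ContinuousOn.comp ((contDiffOn_RHSf hH).continuousOn) hflow.continuousOn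
    (fun z hz => mem_Om hT hH hflow hQode hPode hQ0 hP0 hPne z.1 hz.1 z.2 hz.2)

lemma continuousOn_Dgfl : ContinuousOn (fun z : ℝ × (ES d × ES d) => Dgfl d T H Q P z.1 z.2)
    (dom d T) :=
  ContinuousOn.clm_comp (ContinuousOn.comp (continuousOn_fderiv_RHSf hH) hflow.continuousOn
    (fun z hz => mem_Om hT hH hflow hQode hPode hQ0 hP0 hPne z.1 hz.1 z.2 hz.2)) (continuousOn_Mder hflow hT)

lemma hasFDerivAt_gfl : ∀ s ∈ Set.Icc (0:ℝ) T, ∀ u ∈ Om d,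
    HasFDerivAt (fun u' => gfl d H Q P s u') (Dgfl d T H Q P s u) u :=
  fun s hs u hu => (hasFDerivAt_RHSf hH _ (mem_Om hT hH hflow hQode hPode hQ0 hP0 hPne s hs u hu)).comp u
    (hasFDerivAt_Mder hflow s hs u hu)

lemma continuousOn_Gfl : ContinuousOn (fun z : ℝ × (ES d × ES d) => Gf d H (flowF d Q P (z.1, z.2)))
    (dom d T) :=
  ContinuousOn.comp ((contDiffOn_Gf hH).continuousOn) hflow.continuousOn
    (fun z hz => mem_Om hT hH hflow hQode hPode hQ0 hP0 hPne z.1 hz.1 z.2 hz.2)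

lemma continuousOn_DGfl : ContinuousOn (fun z : ℝ × (ES d × ES d) => DGfl d T H Q P z.1 z.2)
    (dom d T) :=
  ContinuousOn.clm_comp (ContinuousOn.comp (continuousOn_fderiv_Gf hH) hflow.continuousOn
    (fun z hz => mem_Om hT hH hflow hQode hPode hQ0 hP0 hPne z.1 hz.1 z.2 hz.2)) (continuousOn_Mder hflow hT)

lemma hasFDerivAt_Gfl : ∀ s ∈ Set.Icc (0:ℝ) T, ∀ u ∈ Om d,
    HasFDerivAt (fun u' => Gf d H (flowF d Q P (s, u'))) (DGfl d T H Q P s u) u :=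
  fun s hs u hu => (hasFDerivAt_Gf hH _ (mem_Om hT hH hflow hQode hPode hQ0 hP0 hPne s hs u hu)).comp u (g := Gf d H)
    (hasFDerivAt_Mder hflow s hs u hu)

lemma step1 : ∀ u ∈ Om d, ∀ s ∈ Set.Icc (0:ℝ) T,
    (∫ τ in (0:ℝ)..s, gfl d H Q P τ u) = flowF d Q P (s, u) - u := by
  intro u hu s hs
  have hsub : Set.uIcc (0:ℝ) s ⊆ Set.Icc 0 T := by
    rw [Set.uIcc_of_le hs.1]; exact Set.Icc_subset_Icc le_rfl hs.2
  have hcont : ContinuousOn (fun τ => gfl d H Q P τ u) (Set.uIcc 0 s) := by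
    have h0 : ContinuousOn (fun τ : ℝ => ((τ, u) : ℝ × (ES d × ES d))) (Set.uIcc 0 s) :=
      (continuous_id.prodMk continuous_const).continuousOn
    exact ContinuousOn.comp (g := fun z : ℝ × (ES d × ES d) => gfl d H Q P z.1 z.2)
      (f := fun τ : ℝ => ((τ, u) : ℝ × (ES d × ES d)))
      (continuousOn_gfl hT hH hflow hQode hPode hQ0 hP0 hPne) h0 (fun τ hτ => ⟨hsub hτ, hu⟩)
  rw [intervalIntegral.integral_eq_sub_of_hasDerivAt
    (fun τ hτ => gode hT hH hflow hQode hPode hQ0 hP0 hPne u hu τ (hsub hτ)) hcont.intervalIntegrable]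
  have h00 : flowF d Q P (0, u) = u := by
    simp only [flowF, hQ0, hP0]
  rw [h00]

theorem core_fderiv (S : ℝ → ES d → ES d → ℝ)
    (hS : ∀ t q p, S t q p = ∫ τ in (0:ℝ)..t,
      ((inner ℝ (P τ q p) (deriv (fun s => Q s q p) τ) : ℝ) - H (Q τ q p) (P τ q p)))
    (t : ℝ) (ht : t ∈ Set.Icc (0:ℝ) T) (q p : ES d) (hp : p ≠ 0) :
    HasFDerivAt (fun u : ES d × ES d => flowF d Q P (t, u)) (Mder d T Q P t (q,p)) (q,p) ∧
    HasFDerivAt (fun u : ES d × ES d => S t u.1 u.2)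
      ((innerSL ℝ (P t q p)).comp ((fst ℝ (ES d) (ES d)).comp (Mder d T Q P t (q,p)))
        - (innerSL ℝ p).comp (fst ℝ (ES d) (ES d))) (q,p) := by
  have hqp : ((q,p) : ES d × ES d) ∈ Om d := hp
  refine ⟨hasFDerivAt_Mder hflow t ht _ hqp, ?_⟩
  have hproj : ContinuousOn (fun τ : ℝ => ((τ, ((q,p) : ES d × ES d)) : ℝ × (ES d × ES d)))
      (Set.Icc 0 T) := (continuous_id.prodMk continuous_const).continuousOn
  have hprojmem : ∀ τ ∈ Set.Icc (0:ℝ) T, ((τ, ((q,p) : ES d × ES d)) : ℝ × (ES d × ES d)) ∈ dom d T :=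
    fun τ hτ => ⟨hτ, hqp⟩
  have hDgu : ContinuousOn (fun τ => Dgfl d T H Q P τ (q,p)) (Set.Icc 0 T) :=
    ContinuousOn.comp (g := fun z : ℝ × (ES d × ES d) => Dgfl d T H Q P z.1 z.2)
      (f := fun τ : ℝ => ((τ, ((q,p) : ES d × ES d)) : ℝ × (ES d × ES d)))
      (continuousOn_Dgfl hT hH hflow hQode hPode hQ0 hP0 hPne) hproj hprojmem
  have hDGu : ContinuousOn (fun τ => DGfl d T H Q P τ (q,p)) (Set.Icc 0 T) :=
    ContinuousOn.comp (g := fun z : ℝ × (ES d × ES d) => DGfl d T H Q P z.1 z.2)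
      (f := fun τ : ℝ => ((τ, ((q,p) : ES d × ES d)) : ℝ × (ES d × ES d)))
      (continuousOn_DGfl hT hH hflow hQode hPode hQ0 hP0 hPne) hproj hprojmem
  have Mrep : ∀ s ∈ Set.Icc (0:ℝ) T, Mder d T Q P s (q,p)
      = ContinuousLinearMap.id ℝ (ES d × ES d) + ∫ τ in (0:ℝ)..s, Dgfl d T H Q P τ (q,p) := by
    intro s hs
    have hA := param_hasFDerivAt (isOpen_Om d) hqp hs (gfl d H Q P) (Dgfl d T H Q P)
      (continuousOn_gfl hT hH hflow hQode hPode hQ0 hP0 hPne)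
      (continuousOn_Dgfl hT hH hflow hQode hPode hQ0 hP0 hPne)
      (hasFDerivAt_gfl hT hH hflow hQode hPode hQ0 hP0 hPne)
    have hEq : (fun u => ∫ τ in (0:ℝ)..s, gfl d H Q P τ u) =ᶠ[nhds ((q,p) : ES d × ES d)]
        (fun u => flowF d Q P (s,u) - u) := by
      filter_upwards [(isOpen_Om d).mem_nhds hqp] with u hu
      exact step1 hT hH hflow hQode hPode hQ0 hP0 hPne u hu s hs
    have hB : HasFDerivAt (fun u : ES d × ES d => flowF d Q P (s,u) - u)
        (∫ τ in (0:ℝ)..s, Dgfl d T H Q P τ (q,p)) (q,p) := by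
      apply HasFDerivAt.congr_of_eventuallyEq hA hEq.symm
    have hC : HasFDerivAt (fun u : ES d × ES d => flowF d Q P (s,u) - u)
        (Mder d T Q P s (q,p) - ContinuousLinearMap.id ℝ (ES d × ES d)) (q,p) :=
      (hasFDerivAt_Mder hflow s hs _ hqp).sub (hasFDerivAt_id _)
    have huniq := hC.unique hB
    rw [← huniq]; abel
  have hvar : ∀ v : ES d × ES d, ∀ s ∈ Set.Icc (0:ℝ) T,
      Mder d T Q P s (q,p) v = v + ∫ τ in (0:ℝ)..s, Dgfl d T H Q P τ (q,p) v := by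
    intro v s hs
    have hint : IntervalIntegrable (fun τ => Dgfl d T H Q P τ (q,p)) volume 0 s :=
      (hDgu.mono (by rw [Set.uIcc_of_le hs.1]; exact Set.Icc_subset_Icc le_rfl hs.2)).intervalIntegrable
    rw [Mrep s hs, ContinuousLinearMap.add_apply, ContinuousLinearMap.id_apply,
      ContinuousLinearMap.intervalIntegral_apply hint v]
  have hIccnhds : ∀ s ∈ Set.Ioo (0:ℝ) t, Set.Icc (0:ℝ) T ∈ nhds s :=
    fun s hs => Icc_mem_nhds hs.1 (lt_of_lt_of_le hs.2 ht.2)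
  have hh' : ∀ v : ES d × ES d, ∀ s ∈ Set.Ioo (0:ℝ) t,
      HasDerivAt (fun τ => Mder d T Q P τ (q,p) v) (Dgfl d T H Q P s (q,p) v) s := by
    intro v s hs
    have hsIcc : s ∈ Set.Icc (0:ℝ) T := ⟨le_of_lt hs.1, le_of_lt (lt_of_lt_of_le hs.2 ht.2)⟩
    have happ : ContinuousOn (fun τ => Dgfl d T H Q P τ (q,p) v) (Set.Icc 0 T) :=
      hDgu.clm_apply continuousOn_const
    have hca : ContinuousAt (fun τ => Dgfl d T H Q P τ (q,p) v) s :=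
      happ.continuousAt (hIccnhds s hs)
    have hmeas : StronglyMeasurableAtFilter (fun τ => Dgfl d T H Q P τ (q,p) v) (nhds s) volume :=
      ⟨Set.Icc 0 T, hIccnhds s hs, happ.aestronglyMeasurable measurableSet_Icc⟩
    have hint : IntervalIntegrable (fun τ => Dgfl d T H Q P τ (q,p) v) volume 0 s :=
      (happ.mono (by rw [Set.uIcc_of_le hsIcc.1]; exact Set.Icc_subset_Icc le_rfl hsIcc.2)).intervalIntegrable
    have h1 := (intervalIntegral.integral_hasDerivAt_right hint hmeas hca).const_add v
    apply h1.congr_of_eventuallyEq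
    filter_upwards [hIccnhds s hs] with τ hτ using hvar v τ hτ
  -- derivative of the action
  have hAS := param_hasFDerivAt (isOpen_Om d) hqp ht
    (fun τ u => Gf d H (flowF d Q P (τ, u))) (DGfl d T H Q P)
    (continuousOn_Gfl hT hH hflow hQode hPode hQ0 hP0 hPne)
    (continuousOn_DGfl hT hH hflow hQode hPode hQ0 hP0 hPne)
    (hasFDerivAt_Gfl hT hH hflow hQode hPode hQ0 hP0 hPne)
  have hSloc : (fun u : ES d × ES d => S t u.1 u.2) =ᶠ[nhds ((q,p) : ES d × ES d)]
      (fun u => ∫ τ in (0:ℝ)..t, Gf d H (flowF d Q P (τ, u))) := by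
    filter_upwards [(isOpen_Om d).mem_nhds hqp] with u hu
    rw [hS t u.1 u.2]
    refine intervalIntegral.integral_congr ?_
    intro τ hτ
    have hτIcc : τ ∈ Set.Icc (0:ℝ) T := by
      rw [Set.uIcc_of_le ht.1] at hτ; exact ⟨hτ.1, le_trans hτ.2 ht.2⟩
    show (inner ℝ (P τ u.1 u.2) (deriv (fun s => Q s u.1 u.2) τ) : ℝ)
      - H (Q τ u.1 u.2) (P τ u.1 u.2) = Gf d H (flowF d Q P (τ, u))
    have hder : deriv (fun s => Q s u.1 u.2) τ = gbf d H (flowF d Q P (τ, u)) := by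
      rw [(hQode u.1 u.2 hu τ hτIcc).deriv]
      exact gradb_eq hH _ (mem_Om hT hH hflow hQode hPode hQ0 hP0 hPne τ hτIcc u hu)
    rw [hder]
    rfl
  have hSder : HasFDerivAt (fun u : ES d × ES d => S t u.1 u.2)
      (∫ τ in (0:ℝ)..t, DGfl d T H Q P τ (q,p)) (q,p) :=
    HasFDerivAt.congr_of_eventuallyEq hAS hSloc
  have hintG : IntervalIntegrable (fun τ => DGfl d T H Q P τ (q,p)) volume 0 t :=
    (hDGu.mono (by rw [Set.uIcc_of_le ht.1]; exact Set.Icc_subset_Icc le_rfl ht.2)).intervalIntegrable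
  have hLS : ∀ v : ES d × ES d, (∫ τ in (0:ℝ)..t, DGfl d T H Q P τ (q,p)) v
      = (inner ℝ (P t q p) ((Mder d T Q P t (q,p) v).1) : ℝ) - (inner ℝ p v.1 : ℝ) := by
    intro v
    rw [ContinuousLinearMap.intervalIntegral_apply hintG v]
    have hWcont_u : ContinuousOn (fun τ => flowF d Q P (τ, ((q,p) : ES d × ES d)))
        (Set.Icc 0 T) :=
      ContinuousOn.comp (g := flowF d Q P)
        (f := fun τ : ℝ => ((τ, ((q,p) : ES d × ES d)) : ℝ × (ES d × ES d)))
        hflow.continuousOn hproj hprojmem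
    have hMu : ContinuousOn (fun τ => Mder d T Q P τ (q,p)) (Set.Icc 0 T) :=
      ContinuousOn.comp (g := fun z : ℝ × (ES d × ES d) => Mder d T Q P z.1 z.2)
        (f := fun τ : ℝ => ((τ, ((q,p) : ES d × ES d)) : ℝ × (ES d × ES d)))
        (continuousOn_Mder hflow hT) hproj hprojmem
    have hsubt : Set.Icc (0:ℝ) t ⊆ Set.Icc (0:ℝ) T := Set.Icc_subset_Icc le_rfl ht.2
    have hmcont : ContinuousOn
        (fun τ => (inner ℝ ((flowF d Q P (τ,((q,p) : ES d × ES d))).2)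
          ((Mder d T Q P τ (q,p) v).1) : ℝ)) (Set.Icc 0 t) := by
      apply ContinuousOn.inner
      · exact continuous_snd.comp_continuousOn (hWcont_u.mono hsubt)
      · exact continuous_fst.comp_continuousOn
          (((hMu.mono hsubt)).clm_apply continuousOn_const)
    have hm' : ∀ τ ∈ Set.Ioo (0:ℝ) t,
        HasDerivAt (fun σ => (inner ℝ ((flowF d Q P (σ,((q,p) : ES d × ES d))).2)
          ((Mder d T Q P σ (q,p) v).1) : ℝ)) (DGfl d T H Q P τ (q,p) v) τ := by
      intro τ hτ
      have hτIcc : τ ∈ Set.Icc (0:ℝ) T := ⟨le_of_lt hτ.1, le_of_lt (lt_of_lt_of_le hτ.2 ht.2)⟩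
      have hwmem := mem_Om hT hH hflow hQode hPode hQ0 hP0 hPne τ hτIcc _ hqp
      have hW' : HasDerivAt (fun σ => (flowF d Q P (σ, ((q,p) : ES d × ES d))).2)
          ((gfl d H Q P τ (q,p)).2) τ :=
        (ContinuousLinearMap.snd ℝ (ES d) (ES d)).hasFDerivAt.comp_hasDerivAt τ
          (gode hT hH hflow hQode hPode hQ0 hP0 hPne (q,p) hqp τ hτIcc)
      have hh1 : HasDerivAt (fun σ => (Mder d T Q P σ (q,p) v).1)
          ((Dgfl d T H Q P τ (q,p) v).1) τ :=
        (ContinuousLinearMap.fst ℝ (ES d) (ES d)).hasFDerivAt.comp_hasDerivAt τ (hh' v τ hτ)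
      have hprod := HasDerivAt.inner ℝ hW' hh1
      have hval : (inner ℝ ((flowF d Q P (τ,((q,p) : ES d × ES d))).2)
            ((Dgfl d T H Q P τ (q,p) v).1) : ℝ)
          + (inner ℝ ((gfl d H Q P τ (q,p)).2) ((Mder d T Q P τ (q,p) v).1) : ℝ)
          = DGfl d T H Q P τ (q,p) v := by
        have e3 : Dgfl d T H Q P τ (q,p) v
            = fderiv ℝ (RHSf d H) (flowF d Q P (τ,((q,p) : ES d × ES d)))
              (Mder d T Q P τ (q,p) v) := rfl
        have e4 : DGfl d T H Q P τ (q,p) v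
            = fderiv ℝ (Gf d H) (flowF d Q P (τ,((q,p) : ES d × ES d)))
              (Mder d T Q P τ (q,p) v) := rfl
        have e5 : (gfl d H Q P τ (q,p)).2
            = -(gaf d H (flowF d Q P (τ,((q,p) : ES d × ES d)))) := rfl
        rw [e3, e4, e5, inner_neg_left,
          fderiv_Gf_apply hH _ hwmem (Mder d T Q P τ (q,p) v)]
        ring
      rw [← hval]
      exact hprod
    rw [intervalIntegral.integral_eq_sub_of_hasDeriv_right_of_le ht.1 hmcont
      (fun τ hτ => (hm' τ hτ).hasDerivWithinAt)
      ((hDGu.clm_apply continuousOn_const).mono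
        (by rw [Set.uIcc_of_le ht.1]; exact Set.Icc_subset_Icc le_rfl ht.2)).intervalIntegrable]
    have hM0 : Mder d T Q P 0 (q,p) v = v := by
      have h0 := hvar v 0 (Set.left_mem_Icc.mpr (le_of_lt hT))
      simpa using h0
    have e7 : (inner ℝ ((flowF d Q P (t,((q,p) : ES d × ES d))).2)
        ((Mder d T Q P t (q,p) v).1) : ℝ)
        = (inner ℝ (P t q p) ((Mder d T Q P t (q,p) v).1) : ℝ) := rfl
    have e8 : (inner ℝ ((flowF d Q P (0,((q,p) : ES d × ES d))).2)
        ((Mder d T Q P 0 (q,p) v).1) : ℝ) = (inner ℝ p v.1 : ℝ) := by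
      show (inner ℝ (P 0 q p) ((Mder d T Q P 0 (q,p) v).1) : ℝ) = _
      rw [hM0, hP0]
    rw [e7, e8]
  have hCLM : (∫ τ in (0:ℝ)..t, DGfl d T H Q P τ (q,p))
      = (innerSL ℝ (P t q p)).comp ((fst ℝ (ES d) (ES d)).comp (Mder d T Q P t (q,p)))
        - (innerSL ℝ p).comp (fst ℝ (ES d) (ES d)) := by
    apply ContinuousLinearMap.ext; intro v
    rw [hLS v]
    simp only [ContinuousLinearMap.sub_apply, ContinuousLinearMap.comp_apply,
      innerSL_apply_apply, ContinuousLinearMap.coe_fst']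
  rw [← hCLM]
  exact hSder

theorem core_exists (S : ℝ → ES d → ES d → ℝ)
    (hS : ∀ t q p, S t q p = ∫ τ in (0:ℝ)..t,
      ((inner ℝ (P τ q p) (deriv (fun s => Q s q p) τ) : ℝ) - H (Q τ q p) (P τ q p)))
    (t : ℝ) (ht : t ∈ Set.Icc (0:ℝ) T) (q p : ES d) (hp : p ≠ 0) :
    ∃ M : (ES d × ES d) →L[ℝ] (ES d × ES d),
      HasFDerivAt (fun u : ES d × ES d => (Q t u.1 u.2, P t u.1 u.2)) M (q,p) ∧
      HasFDerivAt (fun u : ES d × ES d => S t u.1 u.2)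
        ((innerSL ℝ (P t q p)).comp ((fst ℝ (ES d) (ES d)).comp M)
          - (innerSL ℝ p).comp (fst ℝ (ES d) (ES d))) (q,p) :=
  ⟨Mder d T Q P t (q,p),
    core_fderiv hT hH hflow hQode hPode hQ0 hP0 hPne S hS t ht q p hp⟩

end withAll
end main

variable (d : ℕ)

/-- `i ∂_{z_j} Φ = Σ_k Z_{jk} (x − Q)_k` where `∂_z = ∂_q − i∂_p` and `Z = ∂_z(Q + iP)`. -/
theorem phase_dz_identity (hd : 1 ≤ d) (T : ℝ) (hT : 0 < T)
    (H : EuclideanSpace ℝ (Fin d) → EuclideanSpace ℝ (Fin d) → ℝ)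
    (hH : ContDiffOn ℝ 2
      (fun qp : EuclideanSpace ℝ (Fin d) × EuclideanSpace ℝ (Fin d) => H qp.1 qp.2)
      {qp | qp.2 ≠ 0})
    (Q P : ℝ → EuclideanSpace ℝ (Fin d) → EuclideanSpace ℝ (Fin d) → EuclideanSpace ℝ (Fin d))
    (S : ℝ → EuclideanSpace ℝ (Fin d) → EuclideanSpace ℝ (Fin d) → ℝ)
    (hflow : ContDiffOn ℝ 1
      (fun w : ℝ × EuclideanSpace ℝ (Fin d) × EuclideanSpace ℝ (Fin d) =>
        (Q w.1 w.2.1 w.2.2, P w.1 w.2.1 w.2.2))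
      (Set.Icc (0:ℝ) T ×ˢ (Set.univ ×ˢ {p : EuclideanSpace ℝ (Fin d) | p ≠ 0})))
    (hQode : ∀ (q p : EuclideanSpace ℝ (Fin d)), p ≠ 0 → ∀ t ∈ Set.Icc (0:ℝ) T,
      HasDerivAt (fun s => Q s q p) (gradient (H (Q t q p)) (P t q p)) t)
    (hPode : ∀ (q p : EuclideanSpace ℝ (Fin d)), p ≠ 0 → ∀ t ∈ Set.Icc (0:ℝ) T,
      HasDerivAt (fun s => P s q p) (-(gradient (fun q' => H q' (P t q p)) (Q t q p))) t)
    (hQ0 : ∀ q p, Q 0 q p = q) (hP0 : ∀ q p, P 0 q p = p)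
    (hPne : ∀ (q p : EuclideanSpace ℝ (Fin d)), p ≠ 0 → ∀ t ∈ Set.Icc (0:ℝ) T, P t q p ≠ 0)
    (hS : ∀ t q p, S t q p = ∫ τ in (0:ℝ)..t,
      ((inner ℝ (P τ q p) (deriv (fun s => Q s q p) τ) : ℝ) - H (Q τ q p) (P τ q p))) :
    ∀ t ∈ Set.Icc (0:ℝ) T, ∀ (x y q p : EuclideanSpace ℝ (Fin d)), p ≠ 0 → ∀ j : Fin d,
      Complex.I * (fderiv ℝ (fun q' => fgaPhase d Q P S t x y q' p) q
          (EuclideanSpace.single j 1)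
        - Complex.I * fderiv ℝ (fun p' => fgaPhase d Q P S t x y q p') p
          (EuclideanSpace.single j 1))
      = ∑ k : Fin d,
          (fderiv ℝ (fun q' => ((Q t q' p k : ℝ) : ℂ) + Complex.I * ((P t q' p k : ℝ) : ℂ)) q
              (EuclideanSpace.single j 1)
            - Complex.I *
              fderiv ℝ (fun p' => ((Q t q p' k : ℝ) : ℂ) + Complex.I * ((P t q p' k : ℝ) : ℂ)) p
              (EuclideanSpace.single j 1))
          * (((x - Q t q p) k : ℝ) : ℂ) := by
  intro t ht x y q p hp j
  have hH' : ContDiffOn ℝ 2 (fun qp : ES d × ES d => H qp.1 qp.2) (Om d) := hH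
  have hflow' : ContDiffOn ℝ 1 (flowF d Q P) (dom d T) := by
    rw [dom, ← om_eq d]; exact hflow
  obtain ⟨M, hM, hSd⟩ := core_exists hT hH' hflow' hQode hPode hQ0 hP0 hPne S hS t ht q p hp
  have hmkq : HasFDerivAt (fun q' : ES d => ((q', p) : ES d × ES d))
      (inl ℝ (ES d) (ES d)) q := hasFDerivAt_prodMk_left q p
  have hmkp : HasFDerivAt (fun p' : ES d => ((q, p') : ES d × ES d))
      (inr ℝ (ES d) (ES d)) p := hasFDerivAt_prodMk_right q p
  have hWq : HasFDerivAt (fun q' => ((Q t q' p, P t q' p) : ES d × ES d))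
      (M.comp (inl ℝ (ES d) (ES d))) q := hM.comp q hmkq
  have hWp : HasFDerivAt (fun p' => ((Q t q p', P t q p') : ES d × ES d))
      (M.comp (inr ℝ (ES d) (ES d))) p := hM.comp p hmkp
  have hQq : HasFDerivAt (fun q' => Q t q' p)
      ((fst ℝ (ES d) (ES d)).comp (M.comp (inl ℝ (ES d) (ES d)))) q :=
    (fst ℝ (ES d) (ES d)).hasFDerivAt.comp q hWq
  have hPq : HasFDerivAt (fun q' => P t q' p)
      ((snd ℝ (ES d) (ES d)).comp (M.comp (inl ℝ (ES d) (ES d)))) q :=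
    (snd ℝ (ES d) (ES d)).hasFDerivAt.comp q hWq
  have hQp : HasFDerivAt (fun p' => Q t q p')
      ((fst ℝ (ES d) (ES d)).comp (M.comp (inr ℝ (ES d) (ES d)))) p :=
    (fst ℝ (ES d) (ES d)).hasFDerivAt.comp p hWp
  have hPp : HasFDerivAt (fun p' => P t q p')
      ((snd ℝ (ES d) (ES d)).comp (M.comp (inr ℝ (ES d) (ES d)))) p :=
    (snd ℝ (ES d) (ES d)).hasFDerivAt.comp p hWp
  have hSq : HasFDerivAt (fun q' => S t q' p)
      (((innerSL ℝ (P t q p)).comp ((fst ℝ (ES d) (ES d)).comp M)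
        - (innerSL ℝ p).comp (fst ℝ (ES d) (ES d))).comp (inl ℝ (ES d) (ES d))) q :=
    hSd.comp q (g := fun u : ES d × ES d => S t u.1 u.2) hmkq
  have hSp : HasFDerivAt (fun p' => S t q p')
      (((innerSL ℝ (P t q p)).comp ((fst ℝ (ES d) (ES d)).comp M)
        - (innerSL ℝ p).comp (fst ℝ (ES d) (ES d))).comp (inr ℝ (ES d) (ES d))) p :=
    hSd.comp p (g := fun u : ES d × ES d => S t u.1 u.2) hmkp
  -- rewrite the phase into inner-product form
  have hfun_q : (fun q' => fgaPhase d Q P S t x y q' p) = (fun q' =>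
      ((S t q' p : ℝ) : ℂ)
        + Complex.I/2 * ((inner ℝ (x - Q t q' p) (x - Q t q' p) : ℝ) : ℂ)
        + ((inner ℝ (P t q' p) (x - Q t q' p) : ℝ) : ℂ)
        + Complex.I/2 * ((inner ℝ (y - q') (y - q') : ℝ) : ℂ)
        - ((inner ℝ p (y - q') : ℝ) : ℂ)) := by
    funext q'
    simp only [fgaPhase, real_inner_self_eq_norm_sq]
    push_cast
    ring
  have hfun_p : (fun p' => fgaPhase d Q P S t x y q p') = (fun p' =>
      ((S t q p' : ℝ) : ℂ)
        + Complex.I/2 * ((inner ℝ (x - Q t q p') (x - Q t q p') : ℝ) : ℂ)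
        + ((inner ℝ (P t q p') (x - Q t q p') : ℝ) : ℂ)
        + Complex.I/2 * ((inner ℝ (y - q) (y - q) : ℝ) : ℂ)
        - ((inner ℝ p' (y - q) : ℝ) : ℂ)) := by
    funext p'
    simp only [fgaPhase, real_inner_self_eq_norm_sq]
    push_cast
    ring
  -- q-direction derivatives
  have hxQq : HasFDerivAt (fun q' => x - Q t q' p)
      ((0 : ES d →L[ℝ] ES d) - ((fst ℝ (ES d) (ES d)).comp (M.comp (inl ℝ (ES d) (ES d))))) q :=
    (hasFDerivAt_const x q).sub hQq
  have hxQp : HasFDerivAt (fun p' => x - Q t q p')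
      ((0 : ES d →L[ℝ] ES d) - ((fst ℝ (ES d) (ES d)).comp (M.comp (inr ℝ (ES d) (ES d))))) p :=
    (hasFDerivAt_const x p).sub hQp
  have hyq : HasFDerivAt (fun q' : ES d => y - q')
      ((0 : ES d →L[ℝ] ES d) - ContinuousLinearMap.id ℝ (ES d)) q :=
    (hasFDerivAt_const y q).sub (hasFDerivAt_id q)
  -- q-direction CLMs
  have hPhiq : HasFDerivAt (fun q' =>
      ((S t q' p : ℝ) : ℂ)
        + Complex.I/2 * ((inner ℝ (x - Q t q' p) (x - Q t q' p) : ℝ) : ℂ)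
        + ((inner ℝ (P t q' p) (x - Q t q' p) : ℝ) : ℂ)
        + Complex.I/2 * ((inner ℝ (y - q') (y - q') : ℝ) : ℂ)
        - ((inner ℝ p (y - q') : ℝ) : ℂ))
      (Complex.ofRealCLM.comp ((((innerSL ℝ (P t q p)).comp ((fst ℝ (ES d) (ES d)).comp M)
          - (innerSL ℝ p).comp (fst ℝ (ES d) (ES d))).comp (inl ℝ (ES d) (ES d))))
        + (Complex.I/2) • (Complex.ofRealCLM.comp
          ((fderivInnerCLM ℝ (x - Q t q p, x - Q t q p)).comp
            (((0 : ES d →L[ℝ] ES d) - ((fst ℝ (ES d) (ES d)).comp (M.comp (inl ℝ (ES d) (ES d))))).prod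
             ((0 : ES d →L[ℝ] ES d) - ((fst ℝ (ES d) (ES d)).comp (M.comp (inl ℝ (ES d) (ES d))))))))
        + Complex.ofRealCLM.comp
          ((fderivInnerCLM ℝ (P t q p, x - Q t q p)).comp
            (((snd ℝ (ES d) (ES d)).comp (M.comp (inl ℝ (ES d) (ES d)))).prod
             ((0 : ES d →L[ℝ] ES d) - ((fst ℝ (ES d) (ES d)).comp (M.comp (inl ℝ (ES d) (ES d)))))))
        + (Complex.I/2) • (Complex.ofRealCLM.comp
          ((fderivInnerCLM ℝ ((y - q : ES d), (y - q : ES d))).comp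
            (((0 : ES d →L[ℝ] ES d) - ContinuousLinearMap.id ℝ (ES d)).prod
             ((0 : ES d →L[ℝ] ES d) - ContinuousLinearMap.id ℝ (ES d)))))
        - Complex.ofRealCLM.comp
          ((fderivInnerCLM ℝ ((p : ES d), (y - q : ES d))).comp
            ((0 : ES d →L[ℝ] ES d).prod
             ((0 : ES d →L[ℝ] ES d) - ContinuousLinearMap.id ℝ (ES d))))) q := by
    exact ((((Complex.ofRealCLM.hasFDerivAt.comp q hSq).add
      ((Complex.ofRealCLM.hasFDerivAt.comp q (hxQq.inner ℝ hxQq)).const_mul (Complex.I/2))).add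
      (Complex.ofRealCLM.hasFDerivAt.comp q (hPq.inner ℝ hxQq))).add
      ((Complex.ofRealCLM.hasFDerivAt.comp q (hyq.inner ℝ hyq)).const_mul (Complex.I/2))).sub
      (Complex.ofRealCLM.hasFDerivAt.comp q ((hasFDerivAt_const p q).inner ℝ hyq))
  have hPhip : HasFDerivAt (fun p' =>
      ((S t q p' : ℝ) : ℂ)
        + Complex.I/2 * ((inner ℝ (x - Q t q p') (x - Q t q p') : ℝ) : ℂ)
        + ((inner ℝ (P t q p') (x - Q t q p') : ℝ) : ℂ)
        + Complex.I/2 * ((inner ℝ (y - q) (y - q) : ℝ) : ℂ)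
        - ((inner ℝ p' (y - q) : ℝ) : ℂ))
      (Complex.ofRealCLM.comp ((((innerSL ℝ (P t q p)).comp ((fst ℝ (ES d) (ES d)).comp M)
          - (innerSL ℝ p).comp (fst ℝ (ES d) (ES d))).comp (inr ℝ (ES d) (ES d))))
        + (Complex.I/2) • (Complex.ofRealCLM.comp
          ((fderivInnerCLM ℝ (x - Q t q p, x - Q t q p)).comp
            (((0 : ES d →L[ℝ] ES d) - ((fst ℝ (ES d) (ES d)).comp (M.comp (inr ℝ (ES d) (ES d))))).prod
             ((0 : ES d →L[ℝ] ES d) - ((fst ℝ (ES d) (ES d)).comp (M.comp (inr ℝ (ES d) (ES d))))))))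
        + Complex.ofRealCLM.comp
          ((fderivInnerCLM ℝ (P t q p, x - Q t q p)).comp
            (((snd ℝ (ES d) (ES d)).comp (M.comp (inr ℝ (ES d) (ES d)))).prod
             ((0 : ES d →L[ℝ] ES d) - ((fst ℝ (ES d) (ES d)).comp (M.comp (inr ℝ (ES d) (ES d)))))))
        + 0
        - Complex.ofRealCLM.comp
          ((fderivInnerCLM ℝ ((p : ES d), (y - q : ES d))).comp
            ((ContinuousLinearMap.id ℝ (ES d)).prod (0 : ES d →L[ℝ] ES d)))) p := by
    exact ((((Complex.ofRealCLM.hasFDerivAt.comp p hSp).add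
      ((Complex.ofRealCLM.hasFDerivAt.comp p (hxQp.inner ℝ hxQp)).const_mul (Complex.I/2))).add
      (Complex.ofRealCLM.hasFDerivAt.comp p (hPp.inner ℝ hxQp))).add
      (hasFDerivAt_const (Complex.I/2 * ((inner ℝ (y - q) (y - q) : ℝ) : ℂ)) p)).sub
      (Complex.ofRealCLM.hasFDerivAt.comp p ((hasFDerivAt_id p).inner ℝ (hasFDerivAt_const (y - q) p)))
  have hkq : ∀ k : Fin d, HasFDerivAt
      (fun q' => ((Q t q' p k : ℝ) : ℂ) + Complex.I * ((P t q' p k : ℝ) : ℂ))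
      (Complex.ofRealCLM.comp ((EuclideanSpace.proj k).comp
          ((fst ℝ (ES d) (ES d)).comp (M.comp (inl ℝ (ES d) (ES d)))))
        + Complex.I • (Complex.ofRealCLM.comp ((EuclideanSpace.proj k).comp
          ((snd ℝ (ES d) (ES d)).comp (M.comp (inl ℝ (ES d) (ES d))))))) q := fun k => by
    exact (Complex.ofRealCLM.hasFDerivAt.comp q
        ((EuclideanSpace.proj k).hasFDerivAt.comp q hQq)).add
      ((Complex.ofRealCLM.hasFDerivAt.comp q
        ((EuclideanSpace.proj k).hasFDerivAt.comp q hPq)).const_mul Complex.I)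
  have hkp : ∀ k : Fin d, HasFDerivAt
      (fun p' => ((Q t q p' k : ℝ) : ℂ) + Complex.I * ((P t q p' k : ℝ) : ℂ))
      (Complex.ofRealCLM.comp ((EuclideanSpace.proj k).comp
          ((fst ℝ (ES d) (ES d)).comp (M.comp (inr ℝ (ES d) (ES d)))))
        + Complex.I • (Complex.ofRealCLM.comp ((EuclideanSpace.proj k).comp
          ((snd ℝ (ES d) (ES d)).comp (M.comp (inr ℝ (ES d) (ES d))))))) p := fun k => by
    exact (Complex.ofRealCLM.hasFDerivAt.comp p
        ((EuclideanSpace.proj k).hasFDerivAt.comp p hQp)).add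
      ((Complex.ofRealCLM.hasFDerivAt.comp p
        ((EuclideanSpace.proj k).hasFDerivAt.comp p hPp)).const_mul Complex.I)
  rw [hfun_q, hfun_p, hPhiq.fderiv, hPhip.fderiv]
  rw [Finset.sum_congr rfl (fun k _ => by rw [(hkq k).fderiv, (hkp k).fderiv])]
  simp only [ContinuousLinearMap.add_apply, ContinuousLinearMap.sub_apply,
    ContinuousLinearMap.comp_apply, ContinuousLinearMap.smul_apply,
    ContinuousLinearMap.zero_apply, ContinuousLinearMap.neg_apply,
    ContinuousLinearMap.coe_fst', ContinuousLinearMap.coe_snd',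
    ContinuousLinearMap.inl_apply, ContinuousLinearMap.inr_apply,
    ContinuousLinearMap.id_apply, Complex.ofRealCLM_apply, fderivInnerCLM_apply,
    ContinuousLinearMap.prod_apply, innerSL_apply_apply, PiLp.proj_apply,
    smul_eq_mul]
  have hRHS : (∑ k : Fin d,
      ((((M (EuclideanSpace.single j 1, 0)).1 k : ℝ) : ℂ)
        + Complex.I * (((M (EuclideanSpace.single j 1, 0)).2 k : ℝ) : ℂ)
        - Complex.I * ((((M (0, EuclideanSpace.single j 1)).1 k : ℝ) : ℂ)
          + Complex.I * (((M (0, EuclideanSpace.single j 1)).2 k : ℝ) : ℂ)))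
        * (((x - Q t q p) k : ℝ) : ℂ))
      = ((inner ℝ ((M (EuclideanSpace.single j 1, 0)).1) (x - Q t q p) : ℝ) : ℂ)
        + Complex.I * ((inner ℝ ((M (EuclideanSpace.single j 1, 0)).2) (x - Q t q p) : ℝ) : ℂ)
        - Complex.I * ((inner ℝ ((M (0, EuclideanSpace.single j 1)).1) (x - Q t q p) : ℝ) : ℂ)
        + ((inner ℝ ((M (0, EuclideanSpace.single j 1)).2) (x - Q t q p) : ℝ) : ℂ) := by
    simp only [PiLp.inner_apply, RCLike.inner_apply, conj_trivial, Complex.ofReal_sum,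
      Finset.mul_sum]
    rw [← Finset.sum_add_distrib, ← Finset.sum_sub_distrib, ← Finset.sum_add_distrib]
    refine Finset.sum_congr rfl (fun k _ => ?_)
    push_cast
    linear_combination (-((((M (0, EuclideanSpace.single j 1)).2 k : ℝ) : ℂ)
      * (((x - Q t q p) k : ℝ) : ℂ))) * Complex.I_sq
  rw [hRHS]
  simp only [zero_sub, inner_neg_left, inner_neg_right, inner_zero_left, inner_zero_right,
    neg_zero, add_zero, zero_add, sub_zero]
  simp only [real_inner_comm (x - Q t q p), real_inner_comm (y - q)]
  push_cast
  linear_combination (Complex.I * ((inner ℝ (x - Q t q p) ((M (0, EuclideanSpace.single j 1)).1) : ℝ) : ℂ)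
    - ((inner ℝ (x - Q t q p) ((M (EuclideanSpace.single j 1, 0)).1) : ℝ) : ℂ)
    - ((inner ℝ (x - Q t q p) ((M (0, EuclideanSpace.single j 1)).2) : ℝ) : ℂ)) * Complex.I_sq
end
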